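/- arXiv:1508.00701 — 2 statements merged into one kernel-verified Lean document; each statement's English description precedes it below -/
import Mathlib

section
/- If the kernel k is not identically zero on 𝔓, then the kernel-based autoconvolution operator F : X → Y is not compact; more precisely, there exists a sequence {h_n} in the closed unit ball of X with h_n ⇀ 0 weakly in X, ‖h_n‖_X not converging to 0, and such that {F(h_n)} has no subsequence converging in norm to 0 in Y (indeed liminf_{n→∞} ‖F(h_n)‖_Y > 0). -/
open MeasureTheory Complex Set Filter Topology
open scoped ENNReal

noncomputable section

/-- Lebesgue measure restricted to `(0,1)`. -/
abbrev μ1 : Measure ℝ := volume.restrict (Set.Ioo (0:ℝ) 1)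
/-- Lebesgue measure restricted to `(0,2)`. -/
abbrev μ2 : Measure ℝ := volume.restrict (Set.Ioo (0:ℝ) 2)
/-- `X = L²_ℂ(0,1)`. -/
abbrev X : Type := Lp ℂ 2 μ1
/-- `Y = L²_ℂ(0,2)`. -/
abbrev Y : Type := Lp ℂ 2 μ2
/-- The parallelogram `𝔓 = {(s,τ) : 0 ≤ τ ≤ 1, τ ≤ s ≤ τ+1}`. -/
def Par : Set (ℝ × ℝ) := {p | 0 ≤ p.2 ∧ p.2 ≤ 1 ∧ p.2 ≤ p.1 ∧ p.1 ≤ p.2 + 1}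

/-- Weak (sequential) convergence of a sequence in a complex inner product space. -/
def WConv {E : Type*} [NormedAddCommGroup E] [InnerProductSpace ℂ E]
    (u : ℕ → E) (x : E) : Prop :=
  ∀ g : E, Tendsto (fun n => (inner ℂ (u n) g : ℂ)) atTop (𝓝 (inner ℂ x g))


def efun (n : ℕ) (x : ℝ) : ℂ := Complex.exp ((2 * Real.pi * n * x : ℝ) * Complex.I)

lemma efun_norm (n : ℕ) (x : ℝ) : ‖efun n x‖ = 1 := by
  rw [efun, Complex.norm_exp_ofReal_mul_I]

lemma efun_continuous (n : ℕ) : Continuous (efun n) := by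
  apply Complex.continuous_exp.comp
  exact (Complex.continuous_ofReal.comp (by continuity)).mul continuous_const

lemma efun_conj_mul (m n : ℕ) (x : ℝ) :
    (starRingEnd ℂ) (efun m x) * efun n x
      = Complex.exp ((2 * (Real.pi:ℂ) * ((n : ℂ) - m) * Complex.I) * (x : ℂ)) := by
  rw [efun, efun, ← Complex.exp_conj, ← Complex.exp_add]
  congr 1
  simp only [map_mul, Complex.conj_ofReal, Complex.conj_I]
  push_cast
  ring

lemma efun_mul (n : ℕ) (s τ : ℝ) : efun n (s - τ) * efun n τ = efun n s := by
  rw [efun, efun, efun, ← Complex.exp_add]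
  congr 1
  push_cast
  ring

lemma efun_integral (m n : ℕ) :
    ∫ τ in Set.Ioo (0:ℝ) 1, (starRingEnd ℂ) (efun m τ) * efun n τ
      = if m = n then 1 else 0 := by
  simp only [efun_conj_mul]
  rw [← integral_Ioc_eq_integral_Ioo, ← intervalIntegral.integral_of_le (by norm_num : (0:ℝ) ≤ 1)]
  by_cases h : m = n
  · subst h
    simp
  · have hsub : ((n : ℂ) - m) ≠ 0 := by
      rw [sub_ne_zero]
      intro hh
      exact h (Nat.cast_injective hh).symm
    have hne : (2 * (Real.pi:ℂ) * ((n : ℂ) - m) * Complex.I : ℂ) ≠ 0 := by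
      apply mul_ne_zero (mul_ne_zero (mul_ne_zero two_ne_zero ?_) hsub) Complex.I_ne_zero
      exact_mod_cast Complex.ofReal_ne_zero.mpr Real.pi_ne_zero
    rw [integral_exp_mul_complex hne]
    have h1 : (2 * (Real.pi:ℂ) * ((n : ℂ) - m) * Complex.I) * ((1:ℝ):ℂ)
        = ((n : ℤ) - (m : ℤ) : ℤ) * (2 * (Real.pi:ℂ) * Complex.I) := by push_cast; ring
    rw [if_neg h, h1, Complex.exp_int_mul_two_pi_mul_I]
    simp

lemma aux_bessel {E : Type*} [NormedAddCommGroup E] [InnerProductSpace ℂ E]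
    {v : ℕ → E} (hv : Orthonormal ℂ v) (x : E) :
    Tendsto (fun n => (inner ℂ (v n) x : ℂ)) atTop (𝓝 0) := by
  have hs : Summable fun i => ‖(inner ℂ (v i) x : ℂ)‖ ^ 2 := hv.inner_products_summable x
  have h2 : Tendsto (fun n => ‖(inner ℂ (v n) x : ℂ)‖ ^ 2) atTop (𝓝 0) := hs.tendsto_atTop_zero
  rw [tendsto_zero_iff_norm_tendsto_zero]
  have h3 := h2.sqrt
  rw [Real.sqrt_zero] at h3
  convert h3 using 2 with n
  exact (Real.sqrt_sq (norm_nonneg _)).symm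

lemma aux_re_lower {c z : ℂ} (h : ‖z - c‖ < ‖c‖ / 2) :
    ‖c‖ ^ 2 / 2 ≤ ((starRingEnd ℂ) c * z).re := by
  have h1 : (starRingEnd ℂ) c * z = (starRingEnd ℂ) c * c + (starRingEnd ℂ) c * (z - c) := by
    ring
  have h2 : ((starRingEnd ℂ) c * c).re = ‖c‖ ^ 2 := by
    have : (starRingEnd ℂ) c * c = (Complex.normSq c : ℂ) := by
      rw [mul_comm]; exact Complex.mul_conj c
    rw [this, Complex.ofReal_re, Complex.normSq_eq_norm_sq]
  have h3 : |((starRingEnd ℂ) c * (z - c)).re| ≤ ‖c‖ * (‖c‖ / 2) := by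
    calc |((starRingEnd ℂ) c * (z - c)).re| ≤ ‖(starRingEnd ℂ) c * (z - c)‖ := by
          exact Complex.abs_re_le_norm _
      _ = ‖c‖ * ‖z - c‖ := by rw [norm_mul, RCLike.norm_conj]
      _ ≤ ‖c‖ * (‖c‖ / 2) := by
          exact mul_le_mul_of_nonneg_left h.le (norm_nonneg c)
  rw [h1, Complex.add_re, h2]
  have := neg_abs_le (((starRingEnd ℂ) c * (z - c)).re)
  nlinarith [norm_nonneg c]


lemma Par_isClosed : IsClosed Par := by
  have : Par = {p : ℝ × ℝ | 0 ≤ p.2} ∩ ({p : ℝ × ℝ | p.2 ≤ 1} ∩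
      ({p : ℝ × ℝ | p.2 ≤ p.1} ∩ {p : ℝ × ℝ | p.1 ≤ p.2 + 1})) := by
    ext p; simp [Par, and_assoc]
  rw [this]
  exact (isClosed_le continuous_const continuous_snd).inter
    ((isClosed_le continuous_snd continuous_const).inter
      ((isClosed_le continuous_snd continuous_fst).inter
        (isClosed_le continuous_fst (continuous_snd.add continuous_const))))

lemma Par_isCompact : IsCompact Par := by
  apply (isCompact_Icc (a := ((0:ℝ), (0:ℝ))) (b := ((2:ℝ), (1:ℝ)))).of_isClosed_subset
    Par_isClosed
  rintro ⟨s, τ⟩ ⟨h1, h2, h3, h4⟩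
  constructor <;> constructor <;> dsimp <;> linarith

lemma k_measurable {k : ℝ × ℝ → ℂ} (hk_cont : ContinuousOn k Par)
    (hk_supp : ∀ p, p ∉ Par → k p = 0) : Measurable k := by
  classical
  have h1 : Measurable (fun p : Par => k p) :=
    (continuousOn_iff_continuous_restrict.mp hk_cont).measurable
  have hEq : k = fun p => if h : p ∈ Par then (fun q : Par => k q) ⟨p, h⟩ else 0 := by
    funext p
    by_cases h : p ∈ Par
    · simp [h]
    · simp [h, hk_supp p h]
  rw [hEq]
  exact Measurable.dite h1 measurable_const Par_isClosed.measurableSet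

lemma k_bound {k : ℝ × ℝ → ℂ} (hk_cont : ContinuousOn k Par)
    (hk_supp : ∀ p, p ∉ Par → k p = 0) :
    ∃ M : ℝ, 0 ≤ M ∧ ∀ p, ‖k p‖ ≤ M := by
  obtain ⟨M, hM⟩ := Par_isCompact.exists_bound_of_continuousOn hk_cont
  refine ⟨max M 0, le_max_right _ _, fun p => ?_⟩
  by_cases h : p ∈ Par
  · exact le_trans (hM p h) (le_max_left _ _)
  · simp [hk_supp p h]


instance : IsFiniteMeasure μ1 := by
  constructor
  rw [Measure.restrict_apply_univ, Real.volume_Ioo]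
  exact ENNReal.ofReal_lt_top

lemma memL2_of_bounded {f : ℝ → ℂ} (hf : AEStronglyMeasurable f μ1) (C : ℝ)
    (h : ∀ x, ‖f x‖ ≤ C) : MemLp f 2 μ1 :=
  MemLp.of_bound hf C (Eventually.of_forall h)

lemma efun_mem (n : ℕ) : MemLp (efun n) 2 μ1 :=
  memL2_of_bounded (efun_continuous n).aestronglyMeasurable 1 (fun x => (efun_norm n x).le)

def EE (n : ℕ) : X := (efun_mem n).toLp (efun n)

lemma EE_orthonormal : Orthonormal ℂ EE := by
  rw [orthonormal_iff_ite]
  intro m n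
  rw [MeasureTheory.L2.inner_def]
  have h1 : ∀ᵐ τ ∂μ1, (inner ℂ (EE m τ) (EE n τ) : ℂ)
      = (starRingEnd ℂ) (efun m τ) * efun n τ := by
    filter_upwards [(efun_mem m).coeFn_toLp, (efun_mem n).coeFn_toLp] with τ h1 h2
    rw [RCLike.inner_apply']
    change (starRingEnd ℂ) ((EE m : ℝ → ℂ) τ) * (EE n : ℝ → ℂ) τ = _
    rw [show (EE m : ℝ → ℂ) τ = efun m τ from h1, show (EE n : ℝ → ℂ) τ = efun n τ from h2]
  rw [integral_congr_ae h1]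
  exact efun_integral m n

set_option maxHeartbeats 1000000 in
/-- If the kernel `k` is not identically zero on `𝔓`, then the autoconvolution
operator `F : X → Y` is not compact: there is a sequence `{h_n}` in the closed unit ball of
`X` with `h_n ⇀ 0` weakly, `‖h_n‖` not converging to `0`, no subsequence of `{F(h_n)}`
converging in norm to `0`, and indeed `liminf ‖F(h_n)‖ > 0`. -/
theorem stmt7 (k : ℝ × ℝ → ℂ) (hk_cont : ContinuousOn k Par)
    (hk_supp : ∀ p, p ∉ Par → k p = 0)
    (hk_symm : ∀ p ∈ Par, k p = k (p.1, p.1 - p.2))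
    (hk_ne : ∃ p ∈ Par, k p ≠ 0)
    (F : X → Y)
    (hF : ∀ f : X, ∀ᵐ s ∂μ2,
      F f s = ∫ τ in (max (s - 1) 0)..(min s 1), k (s, τ) * f (s - τ) * f τ) :
    ∃ h : ℕ → X,
      (∀ n, ‖h n‖ ≤ 1) ∧
      WConv h 0 ∧
      ¬ Tendsto (fun n => ‖h n‖) atTop (𝓝 0) ∧
      (∀ φ : ℕ → ℕ, StrictMono φ → ¬ Tendsto (fun n => F (h (φ n))) atTop (𝓝 0)) ∧
      0 < atTop.liminf (fun n => ‖F (h n)‖) := by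
  classical
  obtain ⟨⟨s₀, a⟩, hp₀, hc0⟩ := hk_ne
  set c : ℂ := k (s₀, a) with hcdef
  obtain ⟨ha0, ha1, has, hsa⟩ := hp₀
  simp only at ha0 ha1 has hsa
  set b : ℝ := s₀ - a with hbdef
  have hb0 : 0 ≤ b := by simp only [hbdef]; linarith
  have hb1 : b ≤ 1 := by simp only [hbdef]; linarith
  have hab : a + b = s₀ := by simp [hbdef]
  have hp₀ : ((s₀, a) : ℝ × ℝ) ∈ Par := ⟨ha0, ha1, has, hsa⟩
  have hbs : b ≤ s₀ := by rw [hbdef]; linarith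
  have hsb : s₀ ≤ b + 1 := by rw [hbdef]; linarith
  have hp₁ : ((s₀, b) : ℝ × ℝ) ∈ Par := ⟨hb0, hb1, hbs, hsb⟩
  have hkp₁ : k (s₀, b) = c := (hk_symm (s₀, a) hp₀).symm
  have hcpos : 0 < ‖c‖ := norm_pos_iff.mpr hc0
  -- continuity at the two base points
  have hcw0 := hk_cont (s₀, a) hp₀
  have hcw1 := hk_cont (s₀, b) hp₁
  rw [Metric.continuousWithinAt_iff] at hcw0 hcw1
  obtain ⟨δ₀, hδ₀pos, hδ₀⟩ := hcw0 (‖c‖ / 2) (by positivity)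
  obtain ⟨δ₁, hδ₁pos, hδ₁⟩ := hcw1 (‖c‖ / 2) (by positivity)
  have hδ₀' : ∀ {q : ℝ × ℝ}, q ∈ Par → dist q (s₀, a) < δ₀ → ‖k q - c‖ < ‖c‖ / 2 := by
    intro q hq hd
    have := hδ₀ hq hd
    rwa [← hcdef, dist_eq_norm] at this
  have hδ₁' : ∀ {q : ℝ × ℝ}, q ∈ Par → dist q (s₀, b) < δ₁ → ‖k q - c‖ < ‖c‖ / 2 := by
    intro q hq hd
    have := hδ₁ hq hd
    rwa [hkp₁, dist_eq_norm] at this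
  -- parameters
  set r : ℝ := min (min δ₀ δ₁ / 4) (1 / 2) with hrdef
  have hr0 : 0 < r := lt_min (by positivity) (by norm_num)
  have hr12 : r ≤ 1 / 2 := min_le_right _ _
  have h3r0 : 3 * r < δ₀ := by
    have h1 : r ≤ min δ₀ δ₁ / 4 := min_le_left _ _
    have h2 : min δ₀ δ₁ ≤ δ₀ := min_le_left _ _
    linarith
  have h3r1 : 3 * r < δ₁ := by
    have h1 : r ≤ min δ₀ δ₁ / 4 := min_le_left _ _
    have h2 : min δ₀ δ₁ ≤ δ₁ := min_le_right _ _
    linarith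
  set α : ℝ := min a (1 - r) with hαdef
  set β : ℝ := min b (1 - r) with hβdef
  have hα0 : 0 ≤ α := le_min ha0 (by linarith)
  have hα1 : α + r ≤ 1 := by
    have := min_le_right a (1 - r); linarith
  have hαa1 : a - r ≤ α := le_min (by linarith) (by linarith)
  have hαa2 : α ≤ a := min_le_left _ _
  have hβ0 : 0 ≤ β := le_min hb0 (by linarith)
  have hβ1 : β + r ≤ 1 := by
    have := min_le_right b (1 - r); linarith
  have hβb1 : b - r ≤ β := le_min (by linarith) (by linarith)
  have hβb2 : β ≤ b := min_le_left _ _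
  -- the bump function
  set S : Set ℝ := Ioo α (α + r) ∪ Ioo β (β + r) with hSdef
  set gfun : ℝ → ℂ := S.indicator (fun _ => (1 : ℂ)) with hgdef
  have hSmeas : MeasurableSet S := measurableSet_Ioo.union measurableSet_Ioo
  have hgmeas : Measurable gfun := measurable_const.indicator hSmeas
  have hgval : ∀ τ, gfun τ = 0 ∨ gfun τ = 1 := by
    intro τ
    by_cases h : τ ∈ S
    · right; simp [hgdef, Set.indicator_of_mem h]
    · left; simp [hgdef, Set.indicator_of_notMem h]
  have hgnorm : ∀ τ, ‖gfun τ‖ ≤ 1 := by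
    intro τ
    rcases hgval τ with h | h <;> simp [h]
  have hgS : ∀ τ, τ ∈ S → gfun τ = 1 := fun τ h => by simp [hgdef, Set.indicator_of_mem h]
  have hgmemS : ∀ τ, gfun τ = 1 → τ ∈ S := by
    intro τ h
    by_contra hn
    rw [hgdef, Set.indicator_of_notMem hn] at h
    exact one_ne_zero h.symm
  have hS01 : S ⊆ Ioo 0 1 := by
    rintro τ (⟨h1, h2⟩ | ⟨h1, h2⟩) <;> constructor <;> linarith
  -- measurability and bound for k
  have hkmeas : Measurable k := k_measurable hk_cont hk_supp
  obtain ⟨M, hM0, hM⟩ := k_bound hk_cont hk_supp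
  -- the limit function G
  set Gfun : ℝ → ℂ :=
    fun s => ∫ τ in (max (s - 1) 0)..(min s 1), k (s, τ) * gfun (s - τ) * gfun τ with hGdef
  set J : Set ℝ := Ioo (α + β + r / 2) (α + β + r) with hJdef
  have hJ02 : J ⊆ Ioo 0 2 := by
    rintro s ⟨h1, h2⟩
    constructor <;> [linarith; linarith]
  -- the key pointwise lower bound for k on relevant points
  have hcore : ∀ s ∈ J, ∀ τ, τ ∈ S → s - τ ∈ S →
      ‖c‖ ^ 2 / 2 ≤ ((starRingEnd ℂ) c * k (s, τ)).re := by
    intro s hs τ hτS hsτS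
    obtain ⟨hs1, hs2⟩ := hs
    obtain ⟨hτ0, hτ1⟩ := hS01 hτS
    obtain ⟨hsτ0, hsτ1⟩ := hS01 hsτS
    have hPmem : ((s, τ) : ℝ × ℝ) ∈ Par := by
      refine ⟨hτ0.le, hτ1.le, ?_, ?_⟩ <;> simp only <;> linarith
    have hss₀ : |s - s₀| < 2 * r := by
      rw [abs_lt]
      constructor <;> linarith
    rcases hτS with hτm | hτm
    · have hdist : dist ((s, τ) : ℝ × ℝ) (s₀, a) < δ₀ := by
        rw [Prod.dist_eq]
        apply max_lt
        · rw [Real.dist_eq]; rw [abs_lt] at hss₀ ⊢; simp only at *; constructor <;> linarith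
        · rw [Real.dist_eq, abs_lt]
          obtain ⟨h1, h2⟩ := hτm
          simp only
          constructor <;> linarith
      exact aux_re_lower (hδ₀' hPmem hdist)
    · have hdist : dist ((s, τ) : ℝ × ℝ) (s₀, b) < δ₁ := by
        rw [Prod.dist_eq]
        apply max_lt
        · rw [Real.dist_eq]; rw [abs_lt] at hss₀ ⊢; simp only at *; constructor <;> linarith
        · rw [Real.dist_eq, abs_lt]
          obtain ⟨h1, h2⟩ := hτm
          simp only
          constructor <;> linarith
      exact aux_re_lower (hδ₁' hPmem hdist)
  -- key lower bound on G
  have hGlow : ∀ s ∈ J, ‖c‖ * r / 4 ≤ ‖Gfun s‖ := by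
    intro s hs
    obtain ⟨hs1, hs2⟩ := hs
    set l : ℝ := max (s - 1) 0 with hldef
    set u : ℝ := min s 1 with hudef
    have hl0 : 0 ≤ l := le_max_right _ _
    have hlα : l ≤ α := max_le (by linarith) hα0
    have hαu : α + r / 2 ≤ u := le_min (by linarith) (by linarith)
    have hlu : l ≤ u := le_trans hlα (le_trans (by linarith) hαu)
    set T : Set ℝ := Ioc α (α + r / 2) with hTdef
    have hTsub : T ⊆ Ioc l u := fun τ hτ => ⟨lt_of_le_of_lt hlα hτ.1, le_trans hτ.2 hαu⟩
    -- pointwise bound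
    have hpt : ∀ τ ∈ Ioc l u,
        T.indicator (fun _ => ‖c‖ ^ 2 / 2) τ
          ≤ ((starRingEnd ℂ) c * (k (s, τ) * gfun (s - τ) * gfun τ)).re := by
      intro τ hτ
      by_cases hT : τ ∈ T
      · rw [Set.indicator_of_mem hT]
        obtain ⟨hT1, hT2⟩ := hT
        have hτS : τ ∈ S := Or.inl ⟨hT1, by linarith⟩
        have hsτS : s - τ ∈ S := Or.inr ⟨by linarith, by linarith⟩
        rw [hgS _ hτS, hgS _ hsτS, mul_one, mul_one]
        exact hcore s ⟨hs1, hs2⟩ τ hτS hsτS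
      · rw [Set.indicator_of_notMem hT]
        rcases hgval τ with h0 | h1
        · simp [h0]
        rcases hgval (s - τ) with h0' | h1'
        · simp [h0']
        rw [h1, h1', mul_one, mul_one]
        exact le_trans (by positivity)
          (hcore s ⟨hs1, hs2⟩ τ (hgmemS _ h1) (hgmemS _ h1'))
    -- integrability
    have hmeasq : Measurable (fun τ => (starRingEnd ℂ) c * (k (s, τ) * gfun (s - τ) * gfun τ)) := by
      apply Measurable.const_mul
      exact ((hkmeas.comp (measurable_const.prodMk measurable_id)).mul
        (hgmeas.comp (measurable_const.sub measurable_id))).mul hgmeas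
    have hint : IntegrableOn
        (fun τ => (starRingEnd ℂ) c * (k (s, τ) * gfun (s - τ) * gfun τ)) (Ioc l u) := by
      apply Integrable.mono' (g := fun _ => ‖c‖ * M)
        (integrableOn_const (hs := measure_Ioc_lt_top.ne)) hmeasq.aestronglyMeasurable
      refine Eventually.of_forall fun τ => ?_
      rw [norm_mul, RCLike.norm_conj, norm_mul, norm_mul]
      calc ‖c‖ * (‖k (s, τ)‖ * ‖gfun (s - τ)‖ * ‖gfun τ‖) ≤ ‖c‖ * (M * 1 * 1) := by
            gcongr
            · exact hM _
            · exact hgnorm _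
            · exact hgnorm _
        _ = ‖c‖ * M := by ring
    have e1 : Gfun s = ∫ τ in Ioc l u, k (s, τ) * gfun (s - τ) * gfun τ :=
      intervalIntegral.integral_of_le hlu
    have e3 : ((starRingEnd ℂ) c * Gfun s).re
        = ∫ τ in Ioc l u, ((starRingEnd ℂ) c * (k (s, τ) * gfun (s - τ) * gfun τ)).re := by
      rw [e1, ← integral_const_mul]
      exact (Complex.reCLM.integral_comp_comm hint).symm
    have e4 : ∫ τ in Ioc l u, T.indicator (fun _ => ‖c‖ ^ 2 / 2) τ = ‖c‖ ^ 2 / 2 * (r / 2) := by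
      rw [setIntegral_indicator measurableSet_Ioc,
        Set.inter_eq_self_of_subset_right hTsub, setIntegral_const, hTdef, Real.volume_real_Ioc_of_le (by linarith), smul_eq_mul]
      ring
    have hGre : ‖c‖ ^ 2 / 2 * (r / 2) ≤ ((starRingEnd ℂ) c * Gfun s).re := by
      rw [e3, ← e4]
      exact setIntegral_mono_on
        (((integrableOn_const (hs := measure_Ioc_lt_top.ne))).indicator measurableSet_Ioc)
        hint.re measurableSet_Ioc hpt
    have h5 : ((starRingEnd ℂ) c * Gfun s).re ≤ ‖c‖ * ‖Gfun s‖ := by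
      calc ((starRingEnd ℂ) c * Gfun s).re ≤ |((starRingEnd ℂ) c * Gfun s).re| := le_abs_self _
        _ ≤ ‖(starRingEnd ℂ) c * Gfun s‖ := by
            exact Complex.abs_re_le_norm _
        _ = ‖c‖ * ‖Gfun s‖ := by rw [norm_mul, RCLike.norm_conj]
    nlinarith [norm_nonneg (Gfun s)]
  -- the sequence
  have hmem : ∀ n : ℕ, MemLp (fun τ => efun n τ * gfun τ) 2 μ1 := by
    intro n
    apply memL2_of_bounded (((efun_continuous n).measurable.mul hgmeas).aestronglyMeasurable) 1
    intro x
    rw [Pi.mul_apply, norm_mul, efun_norm, one_mul]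
    exact hgnorm x
  set h : ℕ → X := fun n => (hmem n).toLp _ with hhdef
  -- norm of h n
  have hnorm_h : ∀ n, ‖h n‖ = (eLpNorm gfun 2 μ1).toReal := by
    intro n
    rw [hhdef]
    rw [Lp.norm_toLp]
    congr 1
    apply eLpNorm_congr_norm_ae
    refine Eventually.of_forall fun τ => ?_
    rw [norm_mul, efun_norm, one_mul]
  have hg_le_one : eLpNorm gfun 2 μ1 ≤ 1 := by
    calc eLpNorm gfun 2 μ1 ≤ eLpNorm (fun _ => (1 : ℂ)) 2 μ1 :=
          eLpNorm_mono_ae (Eventually.of_forall fun τ => by simpa using hgnorm τ)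
      _ = 1 := by
          rw [eLpNorm_const' _ (by norm_num) (by norm_num)]
          simp [Measure.restrict_apply_univ, Real.volume_Ioo]
  have hg_pos : 0 < eLpNorm gfun 2 μ1 := by
    have hsub : Ioo α (α + r) ⊆ Ioo (0:ℝ) 1 := fun τ hτ => ⟨by
        obtain ⟨h1, h2⟩ := hτ; linarith, by obtain ⟨h1, h2⟩ := hτ; linarith⟩
    have hlow : eLpNorm ((Ioo α (α + r)).indicator (fun _ => (1 : ℂ))) 2 μ1
        ≤ eLpNorm gfun 2 μ1 := by
      apply eLpNorm_mono_ae (Eventually.of_forall fun τ => ?_)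
      by_cases hτ : τ ∈ Ioo α (α + r)
      · rw [Set.indicator_of_mem hτ, hgS τ (Or.inl hτ)]
      · rw [Set.indicator_of_notMem hτ]; simp
    rw [eLpNorm_indicator_const measurableSet_Ioo (by norm_num) (by norm_num)] at hlow
    refine lt_of_lt_of_le ?_ hlow
    apply ENNReal.mul_pos
    · simp
    · have : μ1 (Ioo α (α + r)) = ENNReal.ofReal r := by
        rw [Measure.restrict_apply measurableSet_Ioo,
          Set.inter_eq_self_of_subset_left hsub, Real.volume_Ioo]
        congr 1; ring
      rw [this]
      exact (ENNReal.rpow_pos (ENNReal.ofReal_pos.mpr hr0) ENNReal.ofReal_ne_top).ne'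
  -- F applied to h n
  have haeF : ∀ n, (F (h n) : ℝ → ℂ) =ᵐ[μ2] fun s => efun n s * Gfun s := by
    intro n
    have hcoeq : ∀ᵐ τ ∂volume, τ ∈ Ioo (0:ℝ) 1 → (h n : ℝ → ℂ) τ = efun n τ * gfun τ :=
      (ae_restrict_iff' measurableSet_Ioo).mp (hmem n).coeFn_toLp
    have hmem2 : ∀ᵐ s ∂μ2, s ∈ Ioo (0:ℝ) 2 := ae_restrict_mem measurableSet_Ioo
    filter_upwards [hF (h n), hmem2] with s h1 h2
    obtain ⟨hs0, hs2⟩ := h2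
    rw [h1]
    set l : ℝ := max (s - 1) 0 with hldef
    set u : ℝ := min s 1 with hudef
    have hlu : l ≤ u :=
      max_le (le_min (by linarith) (by linarith)) (le_min (by linarith) (by norm_num))
    have hsubae : ∀ᵐ τ ∂volume, s - τ ∈ Ioo (0:ℝ) 1 →
        (h n : ℝ → ℂ) (s - τ) = efun n (s - τ) * gfun (s - τ) :=
      (Measure.measurePreserving_sub_left volume s).quasiMeasurePreserving.ae hcoeq
    have hne1 : ∀ᵐ τ : ℝ ∂volume, τ ≠ 1 := by
      have h0 : (volume : Measure ℝ) {(1:ℝ)} = 0 := Real.volume_singleton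
      simpa using measure_eq_zero_iff_ae_notMem.mp h0
    have hnes : ∀ᵐ τ : ℝ ∂volume, τ ≠ s := by
      have h0 : (volume : Measure ℝ) {s} = 0 := Real.volume_singleton
      simpa using measure_eq_zero_iff_ae_notMem.mp h0
    rw [intervalIntegral.integral_of_le hlu]
    have hGs : Gfun s = ∫ τ in Ioc l u, k (s, τ) * gfun (s - τ) * gfun τ :=
      intervalIntegral.integral_of_le hlu
    rw [hGs, ← integral_const_mul]
    refine integral_congr_ae ((ae_restrict_iff' measurableSet_Ioc).mpr ?_)
    filter_upwards [hcoeq, hsubae, hne1, hnes] with τ e1 e2 e3 e4 hτmem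
    obtain ⟨hτl, hτu⟩ := hτmem
    have hτ1 : τ < 1 := lt_of_le_of_ne (le_trans hτu (min_le_right _ _)) e3
    have hτs : τ < s := lt_of_le_of_ne (le_trans hτu (min_le_left _ _)) e4
    have hτ0 : 0 < τ := lt_of_le_of_lt (le_max_right _ _) hτl
    have hsτ1 : s - τ < 1 := by
      have : s - 1 ≤ l := le_max_left _ _
      linarith
    rw [e1 ⟨hτ0, hτ1⟩, e2 ⟨by linarith, hsτ1⟩, ← efun_mul n s τ]
    ring
  have hFnorm : ∀ n, ‖F (h n)‖ = (eLpNorm Gfun 2 μ2).toReal := by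
    intro n
    rw [Lp.norm_def]
    congr 1
    rw [eLpNorm_congr_ae (haeF n)]
    apply eLpNorm_congr_norm_ae
    refine Eventually.of_forall fun s => ?_
    rw [norm_mul, efun_norm, one_mul]
  have hKfin : eLpNorm Gfun 2 μ2 ≠ ⊤ := by
    have heq : eLpNorm Gfun 2 μ2 = eLpNorm (F (h 0) : ℝ → ℂ) 2 μ2 := by
      rw [eLpNorm_congr_ae (haeF 0)]
      apply eLpNorm_congr_norm_ae
      refine Eventually.of_forall fun s => ?_
      rw [norm_mul, efun_norm, one_mul]
    rw [heq]
    exact Lp.eLpNorm_ne_top _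
  have hKpos : 0 < eLpNorm Gfun 2 μ2 := by
    have hlow : eLpNorm (J.indicator (fun _ => ((‖c‖ * r / 4 : ℝ) : ℂ))) 2 μ2
        ≤ eLpNorm Gfun 2 μ2 := by
      apply eLpNorm_mono_ae (Eventually.of_forall fun s => ?_)
      by_cases hsJ : s ∈ J
      · rw [Set.indicator_of_mem hsJ]
        refine le_trans (le_of_eq ?_) (hGlow s hsJ)
        rw [Complex.norm_real, Real.norm_eq_abs]
        exact abs_of_nonneg (by positivity)
      · rw [Set.indicator_of_notMem hsJ]; simp
    rw [eLpNorm_indicator_const measurableSet_Ioo (by norm_num) (by norm_num)] at hlow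
    refine lt_of_lt_of_le ?_ hlow
    apply ENNReal.mul_pos
    · simp only [ne_eq, enorm_eq_zero]
      intro hcon
      rw [Complex.ofReal_eq_zero] at hcon
      nlinarith
    · have : μ2 J = ENNReal.ofReal (r / 2) := by
        rw [Measure.restrict_apply measurableSet_Ioo,
          Set.inter_eq_self_of_subset_left hJ02, hJdef, Real.volume_Ioo]
        congr 1; ring
      rw [this]
      exact (ENNReal.rpow_pos (ENNReal.ofReal_pos.mpr (by linarith)) ENNReal.ofReal_ne_top).ne'
  have hK : 0 < (eLpNorm Gfun 2 μ2).toReal := ENNReal.toReal_pos hKpos.ne' hKfin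
  refine ⟨h, ?_, ?_, ?_, ?_, ?_⟩
  · intro n
    rw [hnorm_h n]
    have := ENNReal.toReal_mono (by norm_num : (1 : ℝ≥0∞) ≠ ⊤) hg_le_one
    simpa using this
  · intro φ
    rw [inner_zero_left]
    have hψmem : MemLp (fun τ => gfun τ * (φ : ℝ → ℂ) τ) 2 μ1 := by
      apply MemLp.of_le (Lp.memLp φ) (hgmeas.aestronglyMeasurable.mul (Lp.aestronglyMeasurable φ))
      refine Eventually.of_forall fun τ => ?_
      show ‖gfun τ * (φ : ℝ → ℂ) τ‖ ≤ ‖(φ : ℝ → ℂ) τ‖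
      rw [norm_mul]
      nlinarith [hgnorm τ, norm_nonneg ((φ : ℝ → ℂ) τ), norm_nonneg (gfun τ)]
    set ψ : X := hψmem.toLp _ with hψdef
    have hinner : ∀ n, (inner ℂ (h n) φ : ℂ) = inner ℂ (EE n) ψ := by
      intro n
      rw [MeasureTheory.L2.inner_def, MeasureTheory.L2.inner_def]
      apply integral_congr_ae
      filter_upwards [(hmem n).coeFn_toLp, (efun_mem n).coeFn_toLp, hψmem.coeFn_toLp]
        with τ e1 e2 e3
      rw [RCLike.inner_apply', RCLike.inner_apply']
      change (starRingEnd ℂ) ((h n : ℝ → ℂ) τ) * _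
        = (starRingEnd ℂ) ((EE n : ℝ → ℂ) τ) * (ψ : ℝ → ℂ) τ
      rw [show (h n : ℝ → ℂ) τ = efun n τ * gfun τ from e1,
        show (EE n : ℝ → ℂ) τ = efun n τ from e2,
        show (ψ : ℝ → ℂ) τ = gfun τ * (φ : ℝ → ℂ) τ from e3]
      rw [map_mul]
      have hgc : (starRingEnd ℂ) (gfun τ) = gfun τ := by
        rcases hgval τ with h0 | h0 <;> simp [h0]
      rw [hgc]
      ring
    simp only [hinner]
    exact aux_bessel EE_orthonormal ψ
  · intro hten
    have hconst : Tendsto (fun _ : ℕ => (eLpNorm gfun 2 μ1).toReal) atTop (𝓝 0) := by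
      have : (fun n : ℕ => ‖h n‖) = fun _ : ℕ => (eLpNorm gfun 2 μ1).toReal :=
        funext hnorm_h
      rwa [this] at hten
    have := tendsto_nhds_unique hconst tendsto_const_nhds
    have hgpos' : 0 < (eLpNorm gfun 2 μ1).toReal :=
      ENNReal.toReal_pos hg_pos.ne' (ne_top_of_le_ne_top (by norm_num) hg_le_one)
    linarith
  · intro φ hφ hten
    have h1 : Tendsto (fun n => ‖F (h (φ n))‖) atTop (𝓝 0) := by
      simpa using hten.norm
    have h2 : (fun n => ‖F (h (φ n))‖) = fun _ : ℕ => (eLpNorm Gfun 2 μ2).toReal :=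
      funext fun n => hFnorm (φ n)
    rw [h2] at h1
    have := tendsto_nhds_unique h1 tendsto_const_nhds
    linarith
  · have h2 : (fun n => ‖F (h n)‖) = fun _ : ℕ => (eLpNorm Gfun 2 μ2).toReal :=
      funext hFnorm
    rw [h2, liminf_const]
    exact hK
end
end

section
/- Let ε > 0 and let X₀ = H¹_ℂ(0,1). Then the operators f ↦ Sign_ε(F(f)) from X₀ to Y and f ↦ |f| from X₀ to L²(0,1) are weak-to-strong sequentially continuous: whenever f_n ⇀ f weakly in X₀, one has Sign_ε(F(f_n)) → Sign_ε(F(f)) in the norm of Y and |f_n| → |f| in the norm of L²(0,1). -/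
open MeasureTheory Complex Set Filter Topology
open scoped ENNReal

noncomputable section

/-- `f ∈ H¹_ℂ(0,1)` with weak derivative `d`: `f` has an absolutely continuous representative
`f(x) = c + ∫₀ˣ d(t) dt` on `(0,1)` with `d ∈ L²_ℂ(0,1)`. -/
def InH1 (f d : X) : Prop :=
  ∃ c : ℂ, ∀ᵐ x ∂μ1, f x = c + ∫ t in (0:ℝ)..x, d t

open scoped NNReal

instance inst_s16 : IsFiniteMeasure μ1 := by
  constructor
  rw [Measure.restrict_apply_univ, Real.volume_Ioo]
  exact ENNReal.ofReal_lt_top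

instance : IsFiniteMeasure μ2 := by
  constructor
  rw [Measure.restrict_apply_univ, Real.volume_Ioo]
  exact ENNReal.ofReal_lt_top

lemma sign_lip {ε : ℝ} (hε : 0 < ε) (z w : ℂ) :
    ‖z / ((max ε ‖z‖ : ℝ) : ℂ) - w / ((max ε ‖w‖ : ℝ) : ℂ)‖
      ≤ 2 / ε * ‖z - w‖ := by
  set a : ℝ := max ε ‖z‖ with ha_def
  set b : ℝ := max ε ‖w‖ with hb_def
  have ha : 0 < a := lt_max_iff.2 (Or.inl hε)
  have hb : 0 < b := lt_max_iff.2 (Or.inl hε)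
  have hεa : ε ≤ a := le_max_left _ _
  have hza : ‖z‖ ≤ a := le_max_right _ _
  have hwb : ‖w‖ ≤ b := le_max_right _ _
  have key : z / (a:ℂ) - w / (b:ℂ) = (z - w) / (a:ℂ) + w * ((b:ℂ) - (a:ℂ)) / ((a:ℂ) * (b:ℂ)) := by
    have ha' : (a:ℂ) ≠ 0 := by exact_mod_cast ha.ne'
    have hb' : (b:ℂ) ≠ 0 := by exact_mod_cast hb.ne'
    field_simp
    ring
  have hdiff : |b - a| ≤ ‖z - w‖ := by
    have h1 : |max ε ‖w‖ - max ε ‖z‖| ≤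
        max |ε - ε| |‖w‖ - ‖z‖| := abs_max_sub_max_le_max _ _ _ _
    have h2 : |‖w‖ - ‖z‖| ≤ ‖w - z‖ :=
      abs_norm_sub_norm_le w z
    have h3 : ‖w - z‖ = ‖z - w‖ := by
      rw [norm_sub_rev]
    calc |b - a| ≤ max |ε - ε| |‖w‖ - ‖z‖| := h1
      _ ≤ |‖w‖ - ‖z‖| := by simp
      _ ≤ ‖z - w‖ := by rw [← h3]; exact h2
  rw [key]
  have e1 : ‖(z - w) / (a:ℂ)‖ = ‖z - w‖ / a := by
    rw [norm_div]
    simp [abs_of_pos ha]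
  have e2 : ‖w * ((b:ℂ) - (a:ℂ)) / ((a:ℂ) * (b:ℂ))‖ ≤ ‖z - w‖ / a := by
    rw [norm_div, norm_mul, norm_mul]
    have hb' : ‖((b:ℂ) - (a:ℂ))‖ = |b - a| := by
      rw [← Complex.ofReal_sub, Complex.norm_real, Real.norm_eq_abs]
    have hna : ‖(a:ℂ)‖ = a := by simp [abs_of_pos ha]
    have hnb : ‖(b:ℂ)‖ = b := by simp [abs_of_pos hb]
    rw [hb', hna, hnb]
    have hwnorm : ‖w‖ ≤ b := by exact hwb
    rw [div_le_div_iff₀ (by positivity) ha]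
    calc ‖w‖ * |b - a| * a ≤ b * ‖z - w‖ * a := by
          apply mul_le_mul_of_nonneg_right _ ha.le
          exact mul_le_mul hwnorm hdiff (abs_nonneg _) hb.le
      _ = ‖z - w‖ * (a * b) := by ring
  calc ‖(z - w) / (a:ℂ) + w * ((b:ℂ) - (a:ℂ)) / ((a:ℂ) * (b:ℂ))‖
      ≤ ‖(z - w) / (a:ℂ)‖ + ‖w * ((b:ℂ) - (a:ℂ)) / ((a:ℂ) * (b:ℂ))‖ := norm_add_le _ _
    _ ≤ ‖z - w‖ / a + ‖z - w‖ / a := by rw [e1]; exact add_le_add le_rfl e2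
    _ ≤ 2 / ε * ‖z - w‖ := by
        have : ‖z - w‖ / a ≤ ‖z - w‖ / ε := by
          apply div_le_div_of_nonneg_left (norm_nonneg _) hε hεa
        calc ‖z - w‖ / a + ‖z - w‖ / a ≤ ‖z - w‖ / ε + ‖z - w‖ / ε := add_le_add this this
          _ = 2 / ε * ‖z - w‖ := by ring

lemma two_conj : Real.HolderConjugate 2 2 := Real.HolderConjugate.two_two

lemma lint_sq (w : X) (g : ℝ → ℂ) (hg : (w : ℝ → ℂ) =ᵐ[μ1] g) :
    ∫⁻ x, (‖(Set.Ioo (0:ℝ) 1).indicator g x‖₊ : ℝ≥0∞) ^ (2:ℝ) ∂volume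
      = (‖w‖₊ : ℝ≥0∞) ^ (2:ℝ) := by
  have hpt : ∀ x, (‖(Set.Ioo (0:ℝ) 1).indicator g x‖₊ : ℝ≥0∞) ^ (2:ℝ)
      = (Set.Ioo (0:ℝ) 1).indicator (fun x => (‖g x‖₊ : ℝ≥0∞) ^ (2:ℝ)) x := by
    intro x
    by_cases hx : x ∈ Set.Ioo (0:ℝ) 1
    · simp [Set.indicator_of_mem hx]
    · simp [Set.indicator_of_notMem hx, ENNReal.zero_rpow_of_pos (by norm_num : (0:ℝ) < 2)]
  simp_rw [hpt]
  rw [lintegral_indicator measurableSet_Ioo]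
  have h1 : ∫⁻ x in Set.Ioo (0:ℝ) 1, (‖g x‖₊ : ℝ≥0∞) ^ (2:ℝ) ∂volume
      = ∫⁻ x, (‖w x‖₊ : ℝ≥0∞) ^ (2:ℝ) ∂μ1 := by
    refine lintegral_congr_ae ?_
    filter_upwards [hg] with x hx
    rw [hx]
  rw [h1]
  have h2 : eLpNorm (w : ℝ → ℂ) 2 μ1 = (∫⁻ x, (‖w x‖₊ : ℝ≥0∞) ^ (2:ℝ) ∂μ1) ^ (1/2 : ℝ) := by
    rw [eLpNorm_eq_lintegral_rpow_enorm_toReal (by norm_num) (by norm_num)]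
    norm_num [enorm_eq_nnnorm]
  have h3 : (‖w‖₊ : ℝ≥0∞) = eLpNorm (w : ℝ → ℂ) 2 μ1 := by
    rw [Lp.nnnorm_def, ENNReal.coe_toNNReal (Lp.eLpNorm_ne_top w)]
  rw [h3, h2, ← ENNReal.rpow_mul]
  norm_num

lemma holder_bound (s a b K' : ℝ) (hK' : 0 ≤ K') (kk : ℝ → ℂ)
    (hkk : ∀ τ, ‖kk τ‖ ≤ K') (w w' : ℝ → ℂ) (hw : Measurable w) (hw' : Measurable w') :
    ∫⁻ τ in Set.Ioc a b, (‖kk τ * w (s - τ) * w' τ‖₊ : ℝ≥0∞) ∂volume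
      ≤ ENNReal.ofReal K' * ((∫⁻ x, (‖w x‖₊ : ℝ≥0∞) ^ (2:ℝ) ∂volume) ^ (1/2 : ℝ) *
        (∫⁻ x, (‖w' x‖₊ : ℝ≥0∞) ^ (2:ℝ) ∂volume) ^ (1/2 : ℝ)) := by
  have hwm : Measurable fun τ => (‖w (s - τ)‖₊ : ℝ≥0∞) :=
    ((hw.comp (measurable_const_sub s)).nnnorm).coe_nnreal_ennreal
  have hw'm : Measurable fun τ => (‖w' τ‖₊ : ℝ≥0∞) := (hw'.nnnorm).coe_nnreal_ennreal
  calc ∫⁻ τ in Set.Ioc a b, (‖kk τ * w (s - τ) * w' τ‖₊ : ℝ≥0∞) ∂volume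
      ≤ ∫⁻ τ in Set.Ioc a b,
          ENNReal.ofReal K' * ((‖w (s - τ)‖₊ : ℝ≥0∞) * (‖w' τ‖₊ : ℝ≥0∞)) ∂volume := by
        refine lintegral_mono fun τ => ?_
        rw [nnnorm_mul, nnnorm_mul, ENNReal.coe_mul, ENNReal.coe_mul, ← mul_assoc]
        refine mul_le_mul' (mul_le_mul' ?_ le_rfl) le_rfl
        rw [← enorm_eq_nnnorm, ← ofReal_norm]
        exact ENNReal.ofReal_le_ofReal (hkk τ)
    _ = ENNReal.ofReal K' *
          ∫⁻ τ in Set.Ioc a b, (‖w (s - τ)‖₊ : ℝ≥0∞) * (‖w' τ‖₊ : ℝ≥0∞) ∂volume :=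
        lintegral_const_mul' _ _ ENNReal.ofReal_ne_top
    _ ≤ ENNReal.ofReal K' *
          ((∫⁻ τ in Set.Ioc a b, (‖w (s - τ)‖₊ : ℝ≥0∞) ^ (2:ℝ) ∂volume) ^ (1/2 : ℝ) *
           (∫⁻ τ in Set.Ioc a b, (‖w' τ‖₊ : ℝ≥0∞) ^ (2:ℝ) ∂volume) ^ (1/2 : ℝ)) := by
        refine mul_le_mul' le_rfl ?_
        have := ENNReal.lintegral_mul_le_Lp_mul_Lq (volume.restrict (Set.Ioc a b)) two_conj
          hwm.aemeasurable hw'm.aemeasurable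
        simpa [Pi.mul_apply] using this
    _ ≤ ENNReal.ofReal K' *
          ((∫⁻ τ, (‖w (s - τ)‖₊ : ℝ≥0∞) ^ (2:ℝ) ∂volume) ^ (1/2 : ℝ) *
           (∫⁻ τ, (‖w' τ‖₊ : ℝ≥0∞) ^ (2:ℝ) ∂volume) ^ (1/2 : ℝ)) := by
        refine mul_le_mul' le_rfl (mul_le_mul' ?_ ?_) <;>
          exact ENNReal.rpow_le_rpow (setLIntegral_le_lintegral _ _) (by norm_num)
    _ = ENNReal.ofReal K' *
          ((∫⁻ x, (‖w x‖₊ : ℝ≥0∞) ^ (2:ℝ) ∂volume) ^ (1/2 : ℝ) *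
           (∫⁻ x, (‖w' x‖₊ : ℝ≥0∞) ^ (2:ℝ) ∂volume) ^ (1/2 : ℝ)) := by
        have heq : (∫⁻ τ, (‖w (s - τ)‖₊ : ℝ≥0∞) ^ (2:ℝ) ∂volume)
            = ∫⁻ x, (‖w x‖₊ : ℝ≥0∞) ^ (2:ℝ) ∂volume :=
          (Measure.measurePreserving_sub_left volume s).lintegral_comp
            (hw.nnnorm.coe_nnreal_ennreal.pow_const _)
        rw [heq]

lemma integrable_kernel_prod (s a b K' : ℝ) (hK' : 0 ≤ K') (kk : ℝ → ℂ)
    (hkk : ∀ τ, ‖kk τ‖ ≤ K') (hkm : AEStronglyMeasurable kk (volume.restrict (Set.Ioc a b)))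
    (w w' : ℝ → ℂ) (hw : Measurable w) (hw' : Measurable w')
    (hfw : ∫⁻ x, (‖w x‖₊ : ℝ≥0∞) ^ (2:ℝ) ∂volume ≠ ⊤)
    (hfw' : ∫⁻ x, (‖w' x‖₊ : ℝ≥0∞) ^ (2:ℝ) ∂volume ≠ ⊤) :
    IntegrableOn (fun τ => kk τ * w (s - τ) * w' τ) (Set.Ioc a b) volume := by
  constructor
  · exact (hkm.mul ((hw.comp (measurable_const_sub s)).aestronglyMeasurable)).mul
      hw'.aestronglyMeasurable
  · rw [HasFiniteIntegral]
    refine lt_of_le_of_lt (holder_bound s a b K' hK' kk hkk w w' hw hw') ?_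
    refine ENNReal.mul_lt_top ENNReal.ofReal_lt_top ?_
    exact ENNReal.mul_lt_top
      (ENNReal.rpow_lt_top_of_nonneg (by norm_num) hfw)
      (ENNReal.rpow_lt_top_of_nonneg (by norm_num) hfw')

lemma F_diff_bound (k : ℝ × ℝ → ℂ) (K' : ℝ) (hK' : 0 ≤ K') (hkb : ∀ p, ‖k p‖ ≤ K')
    (hk_cont : ContinuousOn k Par) (u v : X) :
    ∀ᵐ s ∂μ2,
      ‖(∫ τ in (max (s - 1) 0)..(min s 1), k (s, τ) * u (s - τ) * u τ)
        - ∫ τ in (max (s - 1) 0)..(min s 1), k (s, τ) * v (s - τ) * v τ‖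
        ≤ K' * ((‖u‖ + ‖v‖) * ‖u - v‖) := by
  have hu := Lp.aestronglyMeasurable u
  have hv := Lp.aestronglyMeasurable v
  set uh : ℝ → ℂ := (Set.Ioo (0:ℝ) 1).indicator (hu.mk u) with huhdef
  set vh : ℝ → ℂ := (Set.Ioo (0:ℝ) 1).indicator (hv.mk v) with hvhdef
  set wh : ℝ → ℂ := (Set.Ioo (0:ℝ) 1).indicator (fun x => hu.mk u x - hv.mk v x) with hwhdef
  have huhm : Measurable uh :=
    (hu.stronglyMeasurable_mk.measurable).indicator measurableSet_Ioo
  have hvhm : Measurable vh :=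
    (hv.stronglyMeasurable_mk.measurable).indicator measurableSet_Ioo
  have hwhm : Measurable wh :=
    ((hu.stronglyMeasurable_mk.measurable).sub
      (hv.stronglyMeasurable_mk.measurable)).indicator measurableSet_Ioo
  have Iu : ∫⁻ x, (‖uh x‖₊ : ℝ≥0∞) ^ (2:ℝ) ∂volume = (‖u‖₊ : ℝ≥0∞) ^ (2:ℝ) :=
    lint_sq u _ hu.ae_eq_mk
  have Iv : ∫⁻ x, (‖vh x‖₊ : ℝ≥0∞) ^ (2:ℝ) ∂volume = (‖v‖₊ : ℝ≥0∞) ^ (2:ℝ) :=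
    lint_sq v _ hv.ae_eq_mk
  have Iw : ∫⁻ x, (‖wh x‖₊ : ℝ≥0∞) ^ (2:ℝ) ∂volume = (‖u - v‖₊ : ℝ≥0∞) ^ (2:ℝ) := by
    refine lint_sq (u - v) _ ?_
    filter_upwards [Lp.coeFn_sub u v, hu.ae_eq_mk, hv.ae_eq_mk] with x h1 h2 h3
    rw [h1]
    simp only [Pi.sub_apply]
    rw [h2, h3]
  have hne : ∀ c : ℝ≥0, ((c : ℝ≥0∞)) ^ (2:ℝ) ≠ ⊤ :=
    fun c => (ENNReal.rpow_lt_top_of_nonneg (by norm_num) ENNReal.coe_ne_top).ne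
  have hIu_ne : ∫⁻ x, (‖uh x‖₊ : ℝ≥0∞) ^ (2:ℝ) ∂volume ≠ ⊤ := by rw [Iu]; exact hne _
  have hIv_ne : ∫⁻ x, (‖vh x‖₊ : ℝ≥0∞) ^ (2:ℝ) ∂volume ≠ ⊤ := by rw [Iv]; exact hne _
  have hIw_ne : ∫⁻ x, (‖wh x‖₊ : ℝ≥0∞) ^ (2:ℝ) ∂volume ≠ ⊤ := by rw [Iw]; exact hne _
  have hsdiff : ∀ τ, uh τ - vh τ = wh τ := by
    intro τ
    by_cases h : τ ∈ Set.Ioo (0:ℝ) 1 <;>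
      simp [huhdef, hvhdef, hwhdef, Set.indicator_of_mem, Set.indicator_of_notMem, h]
  have hu' : ∀ᵐ τ ∂(volume : Measure ℝ), τ ∈ Set.Ioo (0:ℝ) 1 → u τ = uh τ := by
    have h := (ae_restrict_iff' measurableSet_Ioo).mp hu.ae_eq_mk
    filter_upwards [h] with τ h1 hmem
    rw [h1 hmem, huhdef, Set.indicator_of_mem hmem]
  have hv' : ∀ᵐ τ ∂(volume : Measure ℝ), τ ∈ Set.Ioo (0:ℝ) 1 → v τ = vh τ := by
    have h := (ae_restrict_iff' measurableSet_Ioo).mp hv.ae_eq_mk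
    filter_upwards [h] with τ h1 hmem
    rw [h1 hmem, hvhdef, Set.indicator_of_mem hmem]
  filter_upwards [ae_restrict_mem measurableSet_Ioo] with s hs
  obtain ⟨hs0, hs2⟩ := hs
  set a : ℝ := max (s - 1) 0 with hadef
  set b : ℝ := min s 1 with hbdef
  have ha1 : s - 1 ≤ a := le_max_left _ _
  have ha2 : 0 ≤ a := le_max_right _ _
  have hb1 : b ≤ s := min_le_left _ _
  have hb2 : b ≤ 1 := min_le_right _ _
  have hab : a ≤ b := max_le (le_min (by linarith) (by linarith)) (le_min hs0.le zero_le_one)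
  have hmem : ∀ τ ∈ Set.Ioo a b, τ ∈ Set.Ioo (0:ℝ) 1 ∧ s - τ ∈ Set.Ioo (0:ℝ) 1 := by
    rintro τ ⟨h1, h2⟩
    exact ⟨⟨by linarith, by linarith⟩, ⟨by linarith, by linarith⟩⟩
  have hu2 : ∀ᵐ τ ∂(volume : Measure ℝ),
      s - τ ∈ Set.Ioo (0:ℝ) 1 → u (s - τ) = uh (s - τ) :=
    (Measure.measurePreserving_sub_left volume s).quasiMeasurePreserving.ae hu'
  have hv2 : ∀ᵐ τ ∂(volume : Measure ℝ),
      s - τ ∈ Set.Ioo (0:ℝ) 1 → v (s - τ) = vh (s - τ) :=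
    (Measure.measurePreserving_sub_left volume s).quasiMeasurePreserving.ae hv'
  have hbne : ∀ᵐ τ ∂(volume : Measure ℝ), τ ≠ b := by
    rw [ae_iff]
    simpa using measure_singleton b
  have hcongr_u : (∫ τ in a..b, k (s, τ) * u (s - τ) * u τ)
      = ∫ τ in Set.Ioc a b, k (s, τ) * uh (s - τ) * uh τ ∂volume := by
    rw [intervalIntegral.integral_of_le hab]
    refine setIntegral_congr_ae measurableSet_Ioc ?_
    filter_upwards [hu', hu2, hbne] with τ h1 h2 h3 hτ
    obtain ⟨m1, m2⟩ := hmem τ ⟨hτ.1, lt_of_le_of_ne hτ.2 h3⟩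
    rw [h1 m1, h2 m2]
  have hcongr_v : (∫ τ in a..b, k (s, τ) * v (s - τ) * v τ)
      = ∫ τ in Set.Ioc a b, k (s, τ) * vh (s - τ) * vh τ ∂volume := by
    rw [intervalIntegral.integral_of_le hab]
    refine setIntegral_congr_ae measurableSet_Ioc ?_
    filter_upwards [hv', hv2, hbne] with τ h1 h2 h3 hτ
    obtain ⟨m1, m2⟩ := hmem τ ⟨hτ.1, lt_of_le_of_ne hτ.2 h3⟩
    rw [h1 m1, h2 m2]
  have hkk : ∀ τ, ‖k (s, τ)‖ ≤ K' := fun τ => hkb _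
  have hkm : AEStronglyMeasurable (fun τ => k (s, τ)) (volume.restrict (Set.Ioc a b)) := by
    have hmap : Set.MapsTo (fun τ : ℝ => (s, τ)) (Set.Ioc a b) Par := by
      rintro τ ⟨h1, h2⟩
      exact ⟨by linarith, by linarith, by linarith, by linarith⟩
    have hcont : ContinuousOn (fun τ : ℝ => k (s, τ)) (Set.Ioc a b) :=
      hk_cont.comp ((continuous_const.prodMk continuous_id).continuousOn) hmap
    exact hcont.aestronglyMeasurable measurableSet_Ioc
  have hint1 := integrable_kernel_prod s a b K' hK' _ hkk hkm uh uh huhm huhm hIu_ne hIu_ne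
  have hint2 := integrable_kernel_prod s a b K' hK' _ hkk hkm vh vh hvhm hvhm hIv_ne hIv_ne
  have hintA := integrable_kernel_prod s a b K' hK' _ hkk hkm uh wh huhm hwhm hIu_ne hIw_ne
  have hintB := integrable_kernel_prod s a b K' hK' _ hkk hkm wh vh hwhm hvhm hIw_ne hIv_ne
  rw [hcongr_u, hcongr_v, ← integral_sub hint1 hint2]
  have hsplit : ∫ τ in Set.Ioc a b,
        (k (s, τ) * uh (s - τ) * uh τ - k (s, τ) * vh (s - τ) * vh τ) ∂volume
      = (∫ τ in Set.Ioc a b, k (s, τ) * uh (s - τ) * wh τ ∂volume)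
        + ∫ τ in Set.Ioc a b, k (s, τ) * wh (s - τ) * vh τ ∂volume := by
    rw [← integral_add hintA hintB]
    refine integral_congr_ae (ae_of_all _ fun τ => ?_)
    dsimp only
    rw [← hsdiff τ, ← hsdiff (s - τ)]
    ring
  rw [hsplit]
  have hb1' : ∀ (w w' : ℝ → ℂ), Measurable w → Measurable w' →
      (∫⁻ x, (‖w x‖₊ : ℝ≥0∞) ^ (2:ℝ) ∂volume) ≠ ⊤ →
      (∫⁻ x, (‖w' x‖₊ : ℝ≥0∞) ^ (2:ℝ) ∂volume) ≠ ⊤ →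
      ‖∫ τ in Set.Ioc a b, k (s, τ) * w (s - τ) * w' τ ∂volume‖
        ≤ (ENNReal.ofReal K' * ((∫⁻ x, (‖w x‖₊ : ℝ≥0∞) ^ (2:ℝ) ∂volume) ^ (1/2 : ℝ) *
            (∫⁻ x, (‖w' x‖₊ : ℝ≥0∞) ^ (2:ℝ) ∂volume) ^ (1/2 : ℝ))).toReal := by
    intro w w' hwm hw'm hfw hfw'
    refine le_trans (norm_integral_le_lintegral_norm _) ?_
    refine ENNReal.toReal_mono ?_ ?_
    · refine (ENNReal.mul_lt_top ENNReal.ofReal_lt_top (ENNReal.mul_lt_top ?_ ?_)).ne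
      · exact ENNReal.rpow_lt_top_of_nonneg (by norm_num) hfw
      · exact ENNReal.rpow_lt_top_of_nonneg (by norm_num) hfw'
    · simp_rw [ofReal_norm, enorm_eq_nnnorm]
      exact holder_bound s a b K' hK' _ hkk w w' hwm hw'm
  have HA := hb1' uh wh huhm hwhm hIu_ne hIw_ne
  have HB := hb1' wh vh hwhm hvhm hIw_ne hIv_ne
  rw [Iu, Iw] at HA
  rw [Iw, Iv] at HB
  have hrp : ∀ c : ℝ≥0, (((c : ℝ≥0∞)) ^ (2:ℝ)) ^ (1/2 : ℝ) = (c : ℝ≥0∞) := by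
    intro c
    rw [← ENNReal.rpow_mul]
    norm_num
  simp only [hrp] at HA HB
  have htr : ∀ x y : X,
      (ENNReal.ofReal K' * ((‖x‖₊ : ℝ≥0∞) * (‖y‖₊ : ℝ≥0∞))).toReal = K' * (‖x‖ * ‖y‖) := by
    intro x y
    rw [ENNReal.toReal_mul, ENNReal.toReal_mul, ENNReal.toReal_ofReal hK',
      ENNReal.coe_toReal, ENNReal.coe_toReal, coe_nnnorm, coe_nnnorm]
  rw [htr u (u - v)] at HA
  rw [htr (u - v) v] at HB
  calc ‖(∫ τ in Set.Ioc a b, k (s, τ) * uh (s - τ) * wh τ ∂volume)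
        + ∫ τ in Set.Ioc a b, k (s, τ) * wh (s - τ) * vh τ ∂volume‖
      ≤ ‖∫ τ in Set.Ioc a b, k (s, τ) * uh (s - τ) * wh τ ∂volume‖
        + ‖∫ τ in Set.Ioc a b, k (s, τ) * wh (s - τ) * vh τ ∂volume‖ := norm_add_le _ _
    _ ≤ K' * (‖u‖ * ‖u - v‖) + K' * (‖u - v‖ * ‖v‖) := add_le_add HA HB
    _ = K' * ((‖u‖ + ‖v‖) * ‖u - v‖) := by ring

lemma weak_bounded (u : ℕ → X) (x : X)
    (h : ∀ g : X, Tendsto (fun n => (inner ℂ (u n) g : ℂ)) atTop (𝓝 (inner ℂ x g))) :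
    ∃ C : ℝ, 0 ≤ C ∧ ∀ n, ‖u n‖ ≤ C := by
  have hpt : ∀ g : X, ∃ C, ∀ n, ‖(innerSL ℂ (u n)) g‖ ≤ C := by
    intro g
    obtain ⟨C, hC⟩ := ((h g).norm).bddAbove_range
    exact ⟨C, fun n => hC ⟨n, rfl⟩⟩
  obtain ⟨C, hC⟩ := banach_steinhaus hpt
  refine ⟨max C 0, le_max_right _ _, fun n => ?_⟩
  have := hC n
  rw [innerSL_apply_norm] at this
  exact this.trans (le_max_left _ _)

/-- Indicator of `(0, x)` as an element of `X`. -/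
def chi (x : ℝ) : X :=
  indicatorConstLp 2 (measurableSet_Ioo : MeasurableSet (Set.Ioo (0:ℝ) x))
    (measure_ne_top μ1 _) (1 : ℂ)

lemma inner_chi (D : X) {x : ℝ} (hx0 : 0 ≤ x) (hx1 : x ≤ 1) :
    (inner ℂ (chi x) D : ℂ) = ∫ t in Set.Ioc 0 x, D t ∂volume := by
  rw [MeasureTheory.L2.inner_def]
  have h1 : ∫ a, (inner ℂ (chi x a) (D a) : ℂ) ∂μ1
      = ∫ a, (Set.Ioo 0 x).indicator (fun t => D t) a ∂μ1 := by
    refine integral_congr_ae ?_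
    filter_upwards [indicatorConstLp_coeFn (p := 2) (μ := μ1)
      (hs := (measurableSet_Ioo : MeasurableSet (Set.Ioo (0:ℝ) x)))
      (hμs := measure_ne_top μ1 _) (c := (1:ℂ))] with a ha
    rw [RCLike.inner_apply]
    rw [show ((chi x : ℝ → ℂ) a) = (Set.Ioo 0 x).indicator (fun _ => (1:ℂ)) a from ha]
    by_cases hmem : a ∈ Set.Ioo (0:ℝ) x
    · simp [Set.indicator_of_mem hmem]
    · simp [Set.indicator_of_notMem hmem]
  rw [h1, integral_indicator measurableSet_Ioo, Measure.restrict_restrict measurableSet_Ioo,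
    Set.inter_eq_left.mpr (Set.Ioo_subset_Ioo le_rfl hx1), integral_Ioc_eq_integral_Ioo]

lemma norm_chi (x : ℝ) : ‖chi x‖ ≤ 1 := by
  rw [chi, norm_indicatorConstLp (by norm_num) (by norm_num)]
  have h1 : μ1 (Set.Ioo 0 x) ≤ 1 := by
    rw [Measure.restrict_apply measurableSet_Ioo]
    calc volume (Set.Ioo 0 x ∩ Set.Ioo 0 1) ≤ volume (Set.Ioo (0:ℝ) 1) :=
          measure_mono Set.inter_subset_right
      _ = 1 := by rw [Real.volume_Ioo]; norm_num
  have h2 : (μ1 (Set.Ioo 0 x)).toReal ≤ 1 := by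
    refine le_trans (ENNReal.toReal_mono (by norm_num) h1) (by norm_num)
  calc ‖(1:ℂ)‖ * (μ1 (Set.Ioo 0 x)).toReal ^ (1 / (2:ℝ≥0∞).toReal)
      = (μ1 (Set.Ioo 0 x)).toReal ^ (1 / (2:ℝ≥0∞).toReal) := by simp
    _ ≤ 1 := Real.rpow_le_one ENNReal.toReal_nonneg h2 (by norm_num)

lemma strong_conv (fn Dn : ℕ → X) (f d : X) (cn : ℕ → ℂ) (c : ℂ)
    (hcn : ∀ n, ∀ᵐ x ∂μ1, fn n x = cn n + ∫ t in (0:ℝ)..x, Dn n t)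
    (hc : ∀ᵐ x ∂μ1, f x = c + ∫ t in (0:ℝ)..x, d t)
    (hw : ∀ g : X, Tendsto (fun n => (inner ℂ (fn n) g : ℂ)) atTop (𝓝 (inner ℂ f g)))
    (hwD : ∀ g : X, Tendsto (fun n => (inner ℂ (Dn n) g : ℂ)) atTop (𝓝 (inner ℂ d g))) :
    Tendsto (fun n => eLpNorm (fun x => fn n x - f x) 2 μ1) atTop (𝓝 0) := by
  classical
  obtain ⟨CD, hCD0, hCD⟩ := weak_bounded Dn d hwD
  -- integrability of L² functions on `[0,1]`
  have hInt : ∀ D : X, IntegrableOn (fun t => D t) (Set.Icc (0:ℝ) 1) volume := by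
    intro D
    have h1 : Integrable (D : ℝ → ℂ) μ1 := (Lp.memLp D).integrable (by norm_num)
    exact (integrableOn_Icc_iff_integrableOn_Ioo).mpr h1
  -- the primitive functions
  set G : X → ℝ → ℂ := fun D x => ∫ t in Set.Ioc 0 x, D t ∂volume with hGdef
  have hGcont : ∀ D : X, ContinuousOn (G D) (Set.Icc 0 1) := fun D =>
    intervalIntegral.continuousOn_primitive (hInt D)
  have hid : ∀ (D : X) {x : ℝ}, 0 ≤ x → x ≤ 1 → G D x = inner ℂ (chi x) D :=
    fun D _ hx0 hx1 => (inner_chi D hx0 hx1).symm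
  have hGbound : ∀ (D : X) {x : ℝ}, 0 ≤ x → x ≤ 1 → ‖G D x‖ ≤ ‖D‖ := by
    intro D x hx0 hx1
    rw [hid D hx0 hx1]
    calc ‖(inner ℂ (chi x) D : ℂ)‖ ≤ ‖chi x‖ * ‖D‖ := norm_inner_le_norm _ _
      _ ≤ 1 * ‖D‖ := by
          exact mul_le_mul_of_nonneg_right (norm_chi x) (norm_nonneg D)
      _ = ‖D‖ := one_mul _
  -- pointwise convergence of the primitives
  have hptG : ∀ {x : ℝ}, 0 ≤ x → x ≤ 1 →
      Tendsto (fun n => G (Dn n) x) atTop (𝓝 (G d x)) := by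
    intro x hx0 hx1
    have h1 : Tendsto (fun n => (starRingEnd ℂ) (inner ℂ (Dn n) (chi x) : ℂ)) atTop
        (𝓝 ((starRingEnd ℂ) (inner ℂ d (chi x) : ℂ))) :=
      (RCLike.continuous_conj.tendsto _).comp (hwD (chi x))
    have h2 : (fun n => (starRingEnd ℂ) (inner ℂ (Dn n) (chi x) : ℂ))
        = fun n => (inner ℂ (chi x) (Dn n) : ℂ) := by
      funext n; exact inner_conj_symm _ _
    rw [h2] at h1
    have h3 : (starRingEnd ℂ) (inner ℂ d (chi x) : ℂ) = inner ℂ (chi x) d := inner_conj_symm _ _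
    rw [h3] at h1
    rw [hid d hx0 hx1]
    exact Filter.Tendsto.congr (fun n => (hid (Dn n) hx0 hx1).symm) h1
  have hGaesm : ∀ D : X, AEStronglyMeasurable (G D) μ1 := fun D =>
    ((hGcont D).mono Set.Ioo_subset_Icc_self).aestronglyMeasurable measurableSet_Ioo
  have hGint : ∀ D : X, Integrable (G D) μ1 := by
    intro D
    refine ⟨hGaesm D, HasFiniteIntegral.of_bounded (C := ‖D‖) ?_⟩
    filter_upwards [ae_restrict_mem measurableSet_Ioo] with x hx
    exact hGbound D hx.1.le hx.2.le
  have hone : ∀ (g : X) (cg : ℂ) (Dg : X),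
      (∀ᵐ x ∂μ1, g x = cg + ∫ t in (0:ℝ)..x, Dg t) →
      (inner ℂ (chi 1) g : ℂ) = cg + ∫ x, G Dg x ∂μ1 := by
    intro g cg Dg hg
    rw [inner_chi g zero_le_one le_rfl, integral_Ioc_eq_integral_Ioo]
    have h1 : ∫ t in Set.Ioo (0:ℝ) 1, g t ∂volume = ∫ x, (cg + G Dg x) ∂μ1 := by
      refine integral_congr_ae ?_
      filter_upwards [hg, ae_restrict_mem measurableSet_Ioo] with t ht hmem
      rw [ht, intervalIntegral.integral_of_le hmem.1.le]
    rw [h1, integral_add (integrable_const _) (hGint Dg), integral_const]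
    congr 1
    have hμ : μ1 Set.univ = 1 := by
      rw [Measure.restrict_apply_univ, Real.volume_Ioo]; norm_num
    rw [measureReal_def, hμ]
    simp
  have hIconv : Tendsto (fun n => ∫ x, G (Dn n) x ∂μ1) atTop (𝓝 (∫ x, G d x ∂μ1)) := by
    refine tendsto_integral_of_dominated_convergence (fun _ => CD)
      (fun n => hGaesm (Dn n)) (integrable_const _) (fun n => ?_) ?_
    · filter_upwards [ae_restrict_mem measurableSet_Ioo] with x hx
      exact (hGbound (Dn n) hx.1.le hx.2.le).trans (hCD n)
    · filter_upwards [ae_restrict_mem measurableSet_Ioo] with x hx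
      exact hptG hx.1.le hx.2.le
  have hfin : Tendsto (fun n => (inner ℂ (chi 1) (fn n) : ℂ)) atTop (𝓝 (inner ℂ (chi 1) f)) := by
    have h1 : Tendsto (fun n => (starRingEnd ℂ) (inner ℂ (fn n) (chi 1) : ℂ)) atTop
        (𝓝 ((starRingEnd ℂ) (inner ℂ f (chi 1) : ℂ))) :=
      (RCLike.continuous_conj.tendsto _).comp (hw (chi 1))
    simp_rw [inner_conj_symm] at h1
    exact h1
  have hcconv : Tendsto (fun n => cn n) atTop (𝓝 c) := by
    have h1 : ∀ n, cn n = (inner ℂ (chi 1) (fn n) : ℂ) - ∫ x, G (Dn n) x ∂μ1 := by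
      intro n
      rw [hone (fn n) (cn n) (Dn n) (hcn n)]
      ring
    have h2 : c = (inner ℂ (chi 1) f : ℂ) - ∫ x, G d x ∂μ1 := by
      rw [hone f c d hc]
      ring
    rw [h2]
    exact Filter.Tendsto.congr (fun n => (h1 n).symm) (hfin.sub hIconv)
  obtain ⟨Cc, hCc⟩ := (hcconv.norm).bddAbove_range
  have hCc' : ∀ n, ‖cn n‖ ≤ Cc := fun n => hCc ⟨n, rfl⟩
  set M : ℝ := Cc + ‖c‖ + CD + ‖d‖ with hM
  set Φ : ℕ → ℝ → ℂ := fun n x => (cn n + G (Dn n) x) - (c + G d x) with hΦ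
  have hΦasm : ∀ n, AEStronglyMeasurable (Φ n) μ1 := fun n =>
    (aestronglyMeasurable_const.add (hGaesm (Dn n))).sub
      (aestronglyMeasurable_const.add (hGaesm d))
  have hΦbdd : ∀ n, ∀ᵐ x ∂μ1, ‖Φ n x‖ ≤ M := by
    intro n
    filter_upwards [ae_restrict_mem measurableSet_Ioo] with x hx
    calc ‖Φ n x‖ ≤ ‖cn n + G (Dn n) x‖ + ‖c + G d x‖ := norm_sub_le _ _
      _ ≤ (‖cn n‖ + ‖G (Dn n) x‖) + (‖c‖ + ‖G d x‖) :=
          add_le_add (norm_add_le _ _) (norm_add_le _ _)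
      _ ≤ (Cc + CD) + (‖c‖ + ‖d‖) := by
          refine add_le_add (add_le_add (hCc' n)
            ((hGbound (Dn n) hx.1.le hx.2.le).trans (hCD n)))
            (add_le_add le_rfl (hGbound d hx.1.le hx.2.le))
      _ = M := by rw [hM]; ring
  have hΦlim : ∀ᵐ x ∂μ1, Tendsto (fun n => Φ n x) atTop (𝓝 0) := by
    filter_upwards [ae_restrict_mem measurableSet_Ioo] with x hx
    have h1 : Tendsto (fun n => cn n + G (Dn n) x) atTop (𝓝 (c + G d x)) :=
      hcconv.add (hptG hx.1.le hx.2.le)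
    simpa using h1.sub (tendsto_const_nhds (x := c + G d x))
  have hL : Tendsto (fun n => ∫⁻ x, (‖Φ n x‖₊ : ℝ≥0∞) ^ (2:ℝ) ∂μ1) atTop (𝓝 0) := by
    have hmain := tendsto_lintegral_of_dominated_convergence' (μ := μ1)
      (F := fun n x => (‖Φ n x‖₊ : ℝ≥0∞) ^ (2:ℝ)) (f := fun _ => 0)
      (fun _ => ENNReal.ofReal M ^ (2:ℝ))
      (fun n => ((hΦasm n).enorm).pow_const _)
      (fun n => by
        filter_upwards [hΦbdd n] with x hx
        refine ENNReal.rpow_le_rpow ?_ (by norm_num)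
        rw [← enorm_eq_nnnorm, ← ofReal_norm]
        exact ENNReal.ofReal_le_ofReal hx)
      (by
        rw [lintegral_const]
        exact ENNReal.mul_ne_top
          (ENNReal.rpow_lt_top_of_nonneg (by norm_num) ENNReal.ofReal_ne_top).ne
          (measure_ne_top μ1 _))
      (by
        filter_upwards [hΦlim] with x hx
        have h1 : Tendsto (fun n => (‖Φ n x‖₊ : ℝ≥0∞)) atTop (𝓝 0) := by
          refine ENNReal.tendsto_coe.mpr ?_
          simpa [Function.comp_def] using (continuous_nnnorm.tendsto (0:ℂ)).comp hx
        have h2 := ((ENNReal.continuous_rpow_const (y := (2:ℝ))).tendsto 0).comp h1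
        simpa [ENNReal.zero_rpow_of_pos, Function.comp_def] using h2)
    simpa using hmain
  have hfinal : ∀ n, eLpNorm (fun x => fn n x - f x) 2 μ1
      = (∫⁻ x, (‖Φ n x‖₊ : ℝ≥0∞) ^ (2:ℝ) ∂μ1) ^ (1/2 : ℝ) := by
    intro n
    have hcg : (fun x => fn n x - f x) =ᵐ[μ1] Φ n := by
      filter_upwards [hcn n, hc, ae_restrict_mem measurableSet_Ioo] with x h1 h2 hx
      rw [h1, h2, hΦ]
      dsimp only
      rw [intervalIntegral.integral_of_le hx.1.le, intervalIntegral.integral_of_le hx.1.le]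
    rw [eLpNorm_congr_ae hcg, eLpNorm_eq_lintegral_rpow_enorm_toReal (by norm_num) (by norm_num)]
    norm_num [enorm_eq_nnnorm]
  have hcomp := ((ENNReal.continuous_rpow_const (y := (1/2 : ℝ))).tendsto 0).comp hL
  simp only [hfinal]
  simpa [ENNReal.zero_rpow_of_pos, Function.comp_def] using hcomp

/-- Let `ε > 0` and `X₀ = H¹_ℂ(0,1)` (encoded by pairs `(f,d)` with
`InH1 f d`; weak convergence in `X₀` is weak `L²`-convergence of the functions and of their
derivatives). Then `f ↦ Sign_ε(F(f))` and `f ↦ |f|` are weak-to-strong sequentially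
continuous: `f_n ⇀ f` in `X₀` implies `Sign_ε(F(f_n)) → Sign_ε(F(f))` in `Y` and
`|f_n| → |f|` in `L²(0,1)`. -/
theorem stmt16 (k : ℝ × ℝ → ℂ) (hk_cont : ContinuousOn k Par)
    (hk_supp : ∀ p, p ∉ Par → k p = 0)
    (hk_symm : ∀ p ∈ Par, k p = k (p.1, p.1 - p.2))
    (F : X → Y)
    (hF : ∀ f : X, ∀ᵐ s ∂μ2,
      F f s = ∫ τ in (max (s - 1) 0)..(min s 1), k (s, τ) * f (s - τ) * f τ)
    (ε : ℝ) (hε : 0 < ε)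
    (Sε : Y → Y)
    (hS : ∀ g : Y, ∀ᵐ s ∂μ2,
      Sε g s = g s / ((max ε ‖g s‖ : ℝ) : ℂ))
    (fn : ℕ → X) (Dn : ℕ → X) (f d : X)
    (hfn : ∀ n, InH1 (fn n) (Dn n)) (hf : InH1 f d)
    (hw : WConv fn f) (hwD : WConv Dn d) :
    Tendsto (fun n => Sε (F (fn n))) atTop (𝓝 (Sε (F f))) ∧
    Tendsto (fun n =>
        eLpNorm (fun τ => ‖fn n τ‖ - ‖f τ‖) 2 μ1)
      atTop (𝓝 0) := by
  classical
  choose cn hcn using hfn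
  obtain ⟨c, hc⟩ := hf
  have hE : Tendsto (fun n => eLpNorm (fun x => fn n x - f x) 2 μ1) atTop (𝓝 0) :=
    strong_conv fn Dn f d cn c hcn hc hw hwD
  have hconc2 : Tendsto (fun n =>
      eLpNorm (fun τ => ‖fn n τ‖ - ‖f τ‖) 2 μ1) atTop (𝓝 0) := by
    refine tendsto_of_tendsto_of_tendsto_of_le_of_le tendsto_const_nhds hE
      (fun n => zero_le) (fun n => ?_)
    refine eLpNorm_mono fun x => ?_
    rw [Real.norm_eq_abs]
    exact abs_norm_sub_norm_le _ _
  have hnorm : Tendsto (fun n => ‖fn n - f‖) atTop (𝓝 0) := by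
    have h1 : ∀ n, ‖fn n - f‖
        = (eLpNorm (fun x => fn n x - f x) 2 μ1).toReal := by
      intro n
      rw [Lp.norm_def]
      congr 1
      refine eLpNorm_congr_ae ?_
      filter_upwards [Lp.coeFn_sub (fn n) f] with x hx
      rw [hx]
      rfl
    simp only [h1]
    have h2 := (ENNReal.tendsto_toReal (a := 0) (by simp)).comp hE
    simpa [Function.comp_def] using h2
  have hK : ∃ K', 0 ≤ K' ∧ ∀ p, ‖k p‖ ≤ K' := by
    have hclosed : IsClosed Par := by
      have hPar : Par = {p : ℝ × ℝ | 0 ≤ p.2} ∩ {p | p.2 ≤ 1} ∩ {p | p.2 ≤ p.1}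
          ∩ {p | p.1 ≤ p.2 + 1} := by
        ext p
        simp only [Par, Set.mem_setOf_eq, Set.mem_inter_iff]
        tauto
      rw [hPar]
      exact (((isClosed_le continuous_const continuous_snd).inter
        (isClosed_le continuous_snd continuous_const)).inter
        (isClosed_le continuous_snd continuous_fst)).inter
        (isClosed_le continuous_fst (continuous_snd.add continuous_const))
    have hcomp : IsCompact Par := by
      refine IsCompact.of_isClosed_subset
        ((isCompact_Icc (a := (0:ℝ)) (b := 2)).prod (isCompact_Icc (a := (0:ℝ)) (b := 1)))
        hclosed ?_
      rintro ⟨x, y⟩ ⟨h1, h2, h3, h4⟩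
      exact ⟨⟨by simpa using le_trans h1 h3, by simp; linarith⟩, ⟨h1, h2⟩⟩
    obtain ⟨K, hKb⟩ := hcomp.exists_bound_of_continuousOn hk_cont
    refine ⟨max K 0, le_max_right _ _, fun p => ?_⟩
    by_cases hp : p ∈ Par
    · exact (hKb p hp).trans (le_max_left _ _)
    · rw [hk_supp p hp]
      simp
  obtain ⟨K', hK'0, hkb⟩ := hK
  have hSbnd : ∀ n, ∀ᵐ s ∂μ2, ‖Sε (F (fn n)) s - Sε (F f) s‖
      ≤ 2 / ε * (K' * ((‖fn n‖ + ‖f‖) * ‖fn n - f‖)) := by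
    intro n
    filter_upwards [hS (F (fn n)), hS (F f), hF (fn n), hF f,
      F_diff_bound k K' hK'0 hkb hk_cont (fn n) f] with s h1 h2 h3 h4 h5
    rw [h1, h2]
    calc ‖F (fn n) s / ((max ε ‖F (fn n) s‖ : ℝ) : ℂ)
          - F f s / ((max ε ‖F f s‖ : ℝ) : ℂ)‖
        ≤ 2 / ε * ‖F (fn n) s - F f s‖ := sign_lip hε _ _
      _ ≤ 2 / ε * (K' * ((‖fn n‖ + ‖f‖) * ‖fn n - f‖)) := by
          refine mul_le_mul_of_nonneg_left ?_ (by positivity)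
          rw [h3, h4]
          exact h5
  set T : ℝ≥0∞ := μ2 Set.univ ^ (2:ℝ≥0∞).toReal⁻¹ with hT
  have hTne : T ≠ ⊤ := by
    rw [hT]
    exact ENNReal.rpow_ne_top_of_nonneg (by norm_num) (measure_ne_top μ2 _)
  have hub : ∀ n, eLpNorm (⇑(Sε (F (fn n)) - Sε (F f))) 2 μ2
      ≤ T * ENNReal.ofReal (2 / ε * (K' * ((‖fn n‖ + ‖f‖) * ‖fn n - f‖))) := by
    intro n
    have hcg : ⇑(Sε (F (fn n)) - Sε (F f)) =ᵐ[μ2]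
        fun s => Sε (F (fn n)) s - Sε (F f) s := by
      filter_upwards [Lp.coeFn_sub (Sε (F (fn n))) (Sε (F f))] with s hs
      rw [hs]
      rfl
    rw [eLpNorm_congr_ae hcg]
    exact eLpNorm_le_of_ae_bound (hSbnd n)
  have hB0 : Tendsto (fun n => 2 / ε * (K' * ((‖fn n‖ + ‖f‖) * ‖fn n - f‖))) atTop (𝓝 0) := by
    have hfn_norm : Tendsto (fun n => ‖fn n‖) atTop (𝓝 ‖f‖) :=
      (tendsto_iff_norm_sub_tendsto_zero.mpr hnorm).norm
    have h2 := (tendsto_const_nhds (x := 2/ε)).mul ((tendsto_const_nhds (x := K')).mul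
      ((hfn_norm.add (tendsto_const_nhds (x := ‖f‖))).mul hnorm))
    simpa using h2
  have hE2 : Tendsto (fun n => eLpNorm (⇑(Sε (F (fn n)) - Sε (F f))) 2 μ2) atTop (𝓝 0) := by
    refine tendsto_of_tendsto_of_tendsto_of_le_of_le tendsto_const_nhds ?_
      (fun n => zero_le) hub
    have h2 := ENNReal.Tendsto.const_mul (a := T) (ENNReal.tendsto_ofReal hB0) (Or.inr hTne)
    simpa using h2
  constructor
  · rw [tendsto_iff_norm_sub_tendsto_zero]
    have h1 : ∀ n, ‖Sε (F (fn n)) - Sε (F f)‖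
        = (eLpNorm (⇑(Sε (F (fn n)) - Sε (F f))) 2 μ2).toReal := fun n => Lp.norm_def _
    simp only [h1]
    have h2 := (ENNReal.tendsto_toReal (a := 0) (by simp)).comp hE2
    simpa [Function.comp_def] using h2
  · exact hconc2
end
end
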